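/- Let g(x) = (x + c) exp((i√t·x + T/(4√t))²) for real parameters t > 0, T, and c ∈ ℂ. Then the Fourier transform of g satisfies ĝ(ξ) evaluated at integers k gives the Poisson-summation identity Σ_{k∈ℤ} (k + f + c) exp((i√t(k+f) + T/(4√t))²) = -Σ_{k∈ℤ} i k (π/t)^{3/2} exp(-π²k²/t + 2πikf + πkT/(2t)) when c = -iT/(4t), for every f ∈ ℝ, t > 0, T ∈ ℝ. -/

import Mathlib

open Real

lemma psg_aux (p t B1 B3 : ℝ) (E A w X Y τ z : ℂ) (hp : (p:ℂ) ≠ 0) (ht : (t:ℂ) ≠ 0)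
    (hτ : τ = ((t/p : ℝ):ℂ) * Complex.I) (hz : z = w * τ)
    (h1 : E * A = ((B1:ℝ):ℂ)) (h2 : (p:ℂ) * ((B1:ℝ):ℂ) = (t:ℂ) * ((B3:ℝ):ℂ)) :
    E * (2*(p:ℂ)*Complex.I)⁻¹ * (A / τ * (X - 2*(p:ℂ)*Complex.I*z*Y)) + E*w*(A*Y)
      = -(((B3:ℝ):ℂ)*(2*(p:ℂ))⁻¹*X) := by
  have hI : Complex.I ≠ 0 := Complex.I_ne_zero
  rw [hz, hτ]
  push_cast
  field_simp
  ring_nf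
  rw [Complex.I_sq]
  linear_combination ((p:ℂ)*X)*h1 + X*h2

set_option maxHeartbeats 1000000 in
/-- Poisson summation identity for `g(x) = (x - iT/(4t)) exp((i√t x + T/(4√t))²)`:
for every `f ∈ ℝ`, `t > 0`, `T ∈ ℝ`,
`Σ_{k∈ℤ} (k + f - iT/(4t)) exp((i√t(k+f) + T/(4√t))²)
  = -Σ_{k∈ℤ} i k (π/t)^{3/2} exp(-π²k²/t + 2πikf + πkT/(2t))`. -/
theorem poisson_summation_gaussian (f t T : ℝ) (ht : 0 < t) :
    (∑' k : ℤ, ((k : ℂ) + (f : ℂ) - Complex.I * (T : ℂ) / (4 * (t : ℂ))) *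
        Complex.exp ((Complex.I * (Real.sqrt t : ℂ) * ((k : ℂ) + (f : ℂ)) +
          (T : ℂ) / (4 * (Real.sqrt t : ℂ))) ^ 2)) =
      -∑' k : ℤ, Complex.I * (k : ℂ) * ((((π / t) ^ ((3 : ℝ) / 2) : ℝ)) : ℂ) *
        Complex.exp (-(π : ℂ) ^ 2 * (k : ℂ) ^ 2 / (t : ℂ) +
          2 * (π : ℂ) * Complex.I * (k : ℂ) * (f : ℂ) +
          (π : ℂ) * (k : ℂ) * (T : ℂ) / (2 * (t : ℂ))) := by
  have hπ : (0:ℝ) < π := Real.pi_pos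
  have ht0 : (t:ℂ) ≠ 0 := Complex.ofReal_ne_zero.mpr ht.ne'
  have hπ0 : (π:ℂ) ≠ 0 := Complex.ofReal_ne_zero.mpr hπ.ne'
  have hI : Complex.I ≠ 0 := Complex.I_ne_zero
  have h2πI : (2*(π:ℂ)*Complex.I) ≠ 0 := by simp [hπ0, hI]
  set τ : ℂ := ((t/π : ℝ) : ℂ) * Complex.I with hτdef
  set z : ℂ := (T:ℂ) / (4*π) + Complex.I * t * f / π with hzdef
  set w : ℂ := (f:ℂ) - Complex.I * T / (4*t) with hwdef
  set C : ℂ := -(t:ℂ) * f^2 + Complex.I * f * T / 2 + T^2 / (16*t) with hCdef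
  set B1 : ℝ := (π/t) ^ ((1:ℝ)/2) with hB1def
  set B3 : ℝ := (π/t) ^ ((3:ℝ)/2) with hB3def
  have hs2 : ((Real.sqrt t : ℝ):ℂ)^2 = (t:ℂ) := by
    rw [← Complex.ofReal_pow, Real.sq_sqrt ht.le]
  have hs0 : ((Real.sqrt t : ℝ):ℂ) ≠ 0 :=
    Complex.ofReal_ne_zero.mpr (Real.sqrt_ne_zero'.mpr ht)
  have hτim : 0 < τ.im := by simp [hτdef, div_pos ht hπ]
  have hτ0 : τ ≠ 0 := by intro h; rw [h] at hτim; simp at hτim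
  have hzw : z = w * τ := by
    rw [hzdef, hwdef, hτdef]; push_cast
    field_simp
    ring_nf
    rw [Complex.I_sq]
    ring
  have hzτ : z / τ = w := by rw [hzw, mul_div_assoc, div_self hτ0, mul_one]
  have h1τ : -1/τ = ((π:ℂ)/t) * Complex.I := by
    rw [hτdef]; push_cast
    rw [div_eq_iff (by simp [ht0, hπ0, hI] : ((t:ℂ)/π) * Complex.I ≠ 0)]
    field_simp
    ring_nf
    rw [Complex.I_sq]
  -- LHS term identity
  have hL : ∀ k : ℤ, ((k : ℂ) + (f : ℂ) - Complex.I * (T : ℂ) / (4 * (t : ℂ))) *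
        Complex.exp ((Complex.I * (Real.sqrt t : ℂ) * ((k : ℂ) + (f : ℂ)) +
          (T : ℂ) / (4 * (Real.sqrt t : ℂ))) ^ 2)
      = (Complex.exp C * (2*π*Complex.I)⁻¹) * jacobiTheta₂'_term k z τ
        + (Complex.exp C * w) * jacobiTheta₂_term k z τ := by
    intro k
    have he : (Complex.I * (Real.sqrt t : ℂ) * ((k : ℂ) + (f : ℂ)) +
          (T : ℂ) / (4 * (Real.sqrt t : ℂ))) ^ 2
        = C + (2 * π * Complex.I * k * z + π * Complex.I * k ^ 2 * τ) := by
      rw [hCdef, hzdef, hτdef]; push_cast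
      rw [← hs2]
      field_simp
      ring_nf
      rw [Complex.I_sq]
      field_simp
      ring
    rw [jacobiTheta₂'_term, jacobiTheta₂_term, he, Complex.exp_add]
    have hco : ((k : ℂ) + (f : ℂ) - Complex.I * (T : ℂ) / (4 * (t : ℂ)))
        = (2*(π:ℂ)*Complex.I)⁻¹ * (2*(π:ℂ)*Complex.I*(k:ℂ)) + w := by
      rw [hwdef]
      field_simp
      ring
    linear_combination (Complex.exp C *
      Complex.exp (2 * (π:ℂ) * Complex.I * (k:ℂ) * z + (π:ℂ) * Complex.I * (k:ℂ) ^ 2 * τ)) * hco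
  -- RHS term identity
  have hR : ∀ k : ℤ, Complex.I * (k : ℂ) * ((B3 : ℝ) : ℂ) *
        Complex.exp (-(π : ℂ) ^ 2 * (k : ℂ) ^ 2 / (t : ℂ) +
          2 * (π : ℂ) * Complex.I * (k : ℂ) * (f : ℂ) +
          (π : ℂ) * (k : ℂ) * (T : ℂ) / (2 * (t : ℂ)))
      = (((B3:ℝ):ℂ) * (2*(π:ℂ))⁻¹) * jacobiTheta₂'_term k w (-1/τ) := by
    intro k
    rw [jacobiTheta₂'_term, jacobiTheta₂_term, h1τ]
    have he : 2 * ↑π * Complex.I * (k:ℂ) * w + ↑π * Complex.I * (k:ℂ) ^ 2 * (((π:ℂ)/t) * Complex.I)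
        = -(π : ℂ) ^ 2 * (k : ℂ) ^ 2 / (t : ℂ) +
          2 * (π : ℂ) * Complex.I * (k : ℂ) * (f : ℂ) +
          (π : ℂ) * (k : ℂ) * (T : ℂ) / (2 * (t : ℂ)) := by
      rw [hwdef]
      field_simp
      ring_nf
      rw [Complex.I_sq]
      ring
    rw [he]
    have hco : Complex.I * (k : ℂ) * ((B3 : ℝ) : ℂ)
        = (((B3:ℝ):ℂ) * (2*(π:ℂ))⁻¹) * (2*(π:ℂ)*Complex.I*(k:ℂ)) := by
      field_simp
    linear_combination (Complex.exp (-(π : ℂ) ^ 2 * (k : ℂ) ^ 2 / (t : ℂ) +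
          2 * (π : ℂ) * Complex.I * (k : ℂ) * (f : ℂ) +
          (π : ℂ) * (k : ℂ) * (T : ℂ) / (2 * (t : ℂ)))) * hco
  -- summability
  have hsum1 : Summable (fun k : ℤ => jacobiTheta₂_term k z τ) :=
    (summable_jacobiTheta₂_term_iff z τ).mpr hτim
  have hsum2 : Summable (fun k : ℤ => jacobiTheta₂'_term k z τ) :=
    (summable_jacobiTheta₂'_term_iff z τ).mpr hτim
  have hθ'zτ : jacobiTheta₂' z τ = ∑' k : ℤ, jacobiTheta₂'_term k z τ := rfl
  have hθzτ : jacobiTheta₂ z τ = ∑' k : ℤ, jacobiTheta₂_term k z τ := rfl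
  have hθ'w : jacobiTheta₂' w (-1/τ) = ∑' k : ℤ, jacobiTheta₂'_term k w (-1/τ) := rfl
  calc (∑' k : ℤ, ((k : ℂ) + (f : ℂ) - Complex.I * (T : ℂ) / (4 * (t : ℂ))) *
        Complex.exp ((Complex.I * (Real.sqrt t : ℂ) * ((k : ℂ) + (f : ℂ)) +
          (T : ℂ) / (4 * (Real.sqrt t : ℂ))) ^ 2))
      = ∑' k : ℤ, ((Complex.exp C * (2*π*Complex.I)⁻¹) * jacobiTheta₂'_term k z τ
          + (Complex.exp C * w) * jacobiTheta₂_term k z τ) := tsum_congr hL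
    _ = (Complex.exp C * (2*π*Complex.I)⁻¹) * jacobiTheta₂' z τ
          + (Complex.exp C * w) * jacobiTheta₂ z τ := by
        rw [Summable.tsum_add (hsum2.mul_left _) (hsum1.mul_left _), tsum_mul_left, tsum_mul_left,
          hθ'zτ, hθzτ]
    _ = -∑' k : ℤ, Complex.I * (k : ℂ) * ((B3:ℝ) : ℂ) *
        Complex.exp (-(π : ℂ) ^ 2 * (k : ℂ) ^ 2 / (t : ℂ) +
          2 * (π : ℂ) * Complex.I * (k : ℂ) * (f : ℂ) +
          (π : ℂ) * (k : ℂ) * (T : ℂ) / (2 * (t : ℂ))) := by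
        rw [tsum_congr hR, tsum_mul_left, ← hθ'w]
        rw [jacobiTheta₂'_functional_equation z τ, jacobiTheta₂_functional_equation z τ, hzτ]
        have hIt : -Complex.I * τ = ((t/π : ℝ):ℂ) := by
          rw [hτdef]; push_cast
          rw [mul_comm, mul_assoc, mul_neg, Complex.I_mul_I]
          norm_num
        have hcpow : (-Complex.I * τ) ^ (1/2 : ℂ) = (((t/π)^((1:ℝ)/2) : ℝ) : ℂ) := by
          rw [hIt, Complex.ofReal_cpow (le_of_lt (div_pos ht hπ))]
          norm_num
        have hCz : Complex.exp C * Complex.exp (-(π:ℂ) * Complex.I * z^2 / τ) = 1 := by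
          rw [← Complex.exp_add, Complex.exp_eq_one_iff]
          refine ⟨0, ?_⟩
          push_cast [hCdef, hzdef, hτdef]
          field_simp
          ring_nf
          rw [Complex.I_sq]
          ring
        have h1 : Complex.exp C * (1 / (-Complex.I * τ) ^ (1/2 : ℂ) *
            Complex.exp (-(π:ℂ) * Complex.I * z^2 / τ)) = ((B1:ℝ):ℂ) := by
          rw [hcpow, mul_comm (1 / _) _, ← mul_assoc, hCz, one_mul, one_div,
            ← Complex.ofReal_inv, ← Real.inv_rpow (le_of_lt (div_pos ht hπ)), inv_div, hB1def]
        have h2 : (π:ℂ) * ((B1:ℝ):ℂ) = (t:ℂ) * ((B3:ℝ):ℂ) := by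
          rw [← Complex.ofReal_mul, ← Complex.ofReal_mul]
          norm_cast
          rw [hB1def, hB3def, show (3:ℝ)/2 = 1/2 + 1 by norm_num,
            Real.rpow_add (div_pos hπ ht), Real.rpow_one]
          field_simp
        exact psg_aux π t B1 B3 (Complex.exp C) _ w _ _ τ z hπ0 ht0 hτdef hzw h1 h2
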